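/- For all n, k ≥ 0, the number of lonesum 0-1 matrices of size n × k equals ∑_{m=0}^{min(n,k)} m! · S(n+1, m+1) · m! · S(k+1, m+1). -/

import Mathlib

open Finset

attribute [local instance] Classical.propDecidable

/-- A 0-1 matrix (with Boolean entries) is lonesum if it contains neither
`(0 1 / 1 0)` nor `(1 0 / 0 1)` as a 2×2 submatrix. -/
def IsLonesum {n k : ℕ} (M : Fin n → Fin k → Bool) : Prop :=
  ∀ i1 i2 : Fin n, ∀ j1 j2 : Fin k, i1 < i2 → j1 < j2 →
    ¬(M i1 j1 = false ∧ M i1 j2 = true ∧ M i2 j1 = true ∧ M i2 j2 = false) ∧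
    ¬(M i1 j1 = true ∧ M i1 j2 = false ∧ M i2 j1 = false ∧ M i2 j2 = true)

/-- The Stirling numbers of the second kind, via the recurrence
`S(n+1, k+1) = S(n, k) + (k+1) S(n, k+1)`. -/
def stirling : ℕ → ℕ → ℕ
  | 0, 0 => 1
  | 0, _ + 1 => 0
  | _ + 1, 0 => 0
  | n + 1, k + 1 => stirling n k + (k + 1) * stirling n (k + 1)

/-- The number of lonesum 0-1 matrices of size `n × k` equals
`∑_{m=0}^{min(n,k)} m! S(n+1, m+1) m! S(k+1, m+1)`. -/
def rowF {n k : ℕ} (M : Fin n → Fin k → Bool) (i : Fin n) : Finset (Fin k) :=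
  univ.filter fun j => M i j = true

def RS {n k : ℕ} (M : Fin n → Fin k → Bool) : Finset (Finset (Fin k)) :=
  (univ.image (rowF M)).erase ∅

lemma mem_rowF {n k : ℕ} {M : Fin n → Fin k → Bool} {i : Fin n} {j : Fin k} :
    j ∈ rowF M i ↔ M i j = true := by simp [rowF]

lemma rows_comparable {n k : ℕ} {M : Fin n → Fin k → Bool} (hM : IsLonesum M)
    (i i' : Fin n) : rowF M i ⊆ rowF M i' ∨ rowF M i' ⊆ rowF M i := by
  by_contra h
  push_neg at h
  obtain ⟨h1, h2⟩ := h
  obtain ⟨j, hj1, hj2⟩ := Finset.not_subset.mp h1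
  obtain ⟨j', hj1', hj2'⟩ := Finset.not_subset.mp h2
  rw [mem_rowF] at hj1 hj1'
  rw [mem_rowF] at hj2 hj2'
  rw [Bool.not_eq_true] at hj2 hj2'
  have hii : i ≠ i' := by rintro rfl; rw [hj1] at hj2; exact Bool.noConfusion hj2
  have hjj : j ≠ j' := by rintro rfl; rw [hj1] at hj2'; exact Bool.noConfusion hj2'
  rcases lt_or_gt_of_ne hii with hi | hi <;> rcases lt_or_gt_of_ne hjj with hj | hj
  · exact (hM i i' j j' hi hj).2 ⟨hj1, hj2', hj2, hj1'⟩
  · exact (hM i i' j' j hi hj).1 ⟨hj2', hj1, hj1', hj2⟩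
  · exact (hM i' i j j' hi hj).1 ⟨hj2, hj1', hj1, hj2'⟩
  · exact (hM i' i j' j hi hj).2 ⟨hj1', hj2, hj2', hj1⟩

def fv {n k : ℕ} (M : Fin n → Fin k → Bool) (i : Fin n) : ℕ :=
  ((RS M).filter (fun T => T ⊆ rowF M i)).card

def gv {n k : ℕ} (M : Fin n → Fin k → Bool) (j : Fin k) : ℕ :=
  ((RS M).filter (fun S => j ∈ S)).card

lemma mem_RS {n k : ℕ} {M : Fin n → Fin k → Bool} {S : Finset (Fin k)} :
    S ∈ RS M ↔ S ≠ ∅ ∧ ∃ i, rowF M i = S := by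
  simp [RS]

lemma RS_chain {n k : ℕ} {M : Fin n → Fin k → Bool} (hM : IsLonesum M)
    {S T : Finset (Fin k)} (hS : S ∈ RS M) (hT : T ∈ RS M) : S ⊆ T ∨ T ⊆ S := by
  obtain ⟨-, i, rfl⟩ := mem_RS.mp hS
  obtain ⟨-, i', rfl⟩ := mem_RS.mp hT
  exact rows_comparable hM i i'

lemma fv_le {n k : ℕ} (M : Fin n → Fin k → Bool) (i : Fin n) : fv M i ≤ (RS M).card :=
  Finset.card_le_card (Finset.filter_subset _ _)

lemma gv_le {n k : ℕ} (M : Fin n → Fin k → Bool) (j : Fin k) : gv M j ≤ (RS M).card :=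
  Finset.card_le_card (Finset.filter_subset _ _)

lemma key_iff {n k : ℕ} {M : Fin n → Fin k → Bool} (hM : IsLonesum M)
    (i : Fin n) (j : Fin k) : M i j = true ↔ (RS M).card < fv M i + gv M j := by
  set A := (RS M).filter (fun T => T ⊆ rowF M i) with hA
  set D := (RS M).filter (fun S => j ∈ S) with hD
  have hcard : (A ∪ D).card + (A ∩ D).card = fv M i + gv M j :=
    Finset.card_union_add_card_inter A D
  constructor
  · intro hij
    have hrow : rowF M i ∈ RS M := by
      rw [mem_RS]
      exact ⟨Finset.ne_empty_of_mem (mem_rowF.mpr hij), i, rfl⟩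
    have hAD : rowF M i ∈ A ∩ D := by
      simp only [hA, hD, Finset.mem_inter, Finset.mem_filter]
      exact ⟨⟨hrow, Finset.Subset.refl _⟩, hrow, mem_rowF.mpr hij⟩
    have hun : A ∪ D = RS M := by
      apply Finset.Subset.antisymm
      · exact Finset.union_subset (Finset.filter_subset _ _) (Finset.filter_subset _ _)
      · intro T hT
        rcases RS_chain hM hT hrow with h | h
        · exact Finset.mem_union_left _ (Finset.mem_filter.mpr ⟨hT, h⟩)
        · exact Finset.mem_union_right _ (Finset.mem_filter.mpr ⟨hT, h (mem_rowF.mpr hij)⟩)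
    have : 1 ≤ (A ∩ D).card := Finset.card_pos.mpr ⟨_, hAD⟩
    rw [hun] at hcard
    omega
  · intro hlt
    have hun : (A ∪ D).card ≤ (RS M).card :=
      Finset.card_le_card (Finset.union_subset (Finset.filter_subset _ _) (Finset.filter_subset _ _))
    have : 0 < (A ∩ D).card := by omega
    obtain ⟨S, hS⟩ := Finset.card_pos.mp this
    simp only [hA, hD, Finset.mem_inter, Finset.mem_filter] at hS
    exact mem_rowF.mp (hS.1.2 hS.2.2)

lemma rank_surj {n k : ℕ} {M : Fin n → Fin k → Bool} (hM : IsLonesum M)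
    {v : ℕ} (h1 : 1 ≤ v) (h2 : v ≤ (RS M).card) :
    ∃ S ∈ RS M, ((RS M).filter (fun T => T ⊆ S)).card = v := by
  set h : Finset (Fin k) → ℕ := fun S => ((RS M).filter (fun T => T ⊆ S)).card with hh
  have hinj : Set.InjOn h ↑(RS M) := by
    intro S hS T hT hST
    by_contra hne
    have key : ∀ S T : Finset (Fin k), S ∈ RS M → T ∈ RS M → S ⊆ T → S ≠ T → h S < h T := by
      intro S T hS hT hsub hne
      apply Finset.card_lt_card
      rw [Finset.ssubset_iff_subset_ne]
      constructor
      · intro U hU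
        rw [Finset.mem_filter] at hU ⊢
        exact ⟨hU.1, hU.2.trans hsub⟩
      · intro heq
        have hTmem : T ∈ (RS M).filter (fun U => U ⊆ T) := Finset.mem_filter.mpr ⟨hT, Finset.Subset.refl _⟩
        rw [← heq, Finset.mem_filter] at hTmem
        exact hne (Finset.Subset.antisymm hsub hTmem.2)
    rcases RS_chain hM hS hT with hsub | hsub
    · exact absurd hST (Nat.ne_of_lt (key S T hS hT hsub hne))
    · exact absurd hST.symm (Nat.ne_of_lt (key T S hT hS hsub (Ne.symm hne)))
  have himg : (RS M).image h = Finset.Icc 1 (RS M).card := by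
    apply Finset.eq_of_subset_of_card_le
    · intro x hx
      obtain ⟨S, hS, rfl⟩ := Finset.mem_image.mp hx
      rw [Finset.mem_Icc]
      constructor
      · exact Finset.card_pos.mpr ⟨S, Finset.mem_filter.mpr ⟨hS, Finset.Subset.refl _⟩⟩
      · exact Finset.card_le_card (Finset.filter_subset _ _)
    · rw [Finset.card_image_of_injOn hinj, Nat.card_Icc]
      omega
  have : v ∈ (RS M).image h := by rw [himg, Finset.mem_Icc]; exact ⟨h1, h2⟩
  obtain ⟨S, hS, hSv⟩ := Finset.mem_image.mp this
  exact ⟨S, hS, hSv⟩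

lemma fv_covers {n k : ℕ} {M : Fin n → Fin k → Bool} (hM : IsLonesum M)
    {v : ℕ} (h1 : 1 ≤ v) (h2 : v ≤ (RS M).card) : ∃ i, fv M i = v := by
  obtain ⟨S, hS, hSv⟩ := rank_surj hM h1 h2
  obtain ⟨-, i, rfl⟩ := mem_RS.mp hS
  exact ⟨i, hSv⟩

lemma gv_covers {n k : ℕ} {M : Fin n → Fin k → Bool} (hM : IsLonesum M)
    {v : ℕ} (h1 : 1 ≤ v) (h2 : v ≤ (RS M).card) : ∃ j, gv M j = v := by
  set m := (RS M).card with hm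
  obtain ⟨S, hS, hSv⟩ := rank_surj hM (v := m + 1 - v) (by omega) (by omega)
  set P := (RS M).filter (fun T => T ⊆ S ∧ T ≠ S) with hP
  have hPcard : P.card = m - v := by
    have : P = ((RS M).filter (fun T => T ⊆ S)).erase S := by
      ext T
      simp only [hP, Finset.mem_filter, Finset.mem_erase]
      tauto
    rw [this, Finset.card_erase_of_mem
      (show S ∈ (RS M).filter (fun T => T ⊆ S) from Finset.mem_filter.mpr ⟨hS, Finset.Subset.refl _⟩), hSv]
    omega
  -- find j ∈ S with ∀ T ∈ RS M, j ∈ T ↔ S ⊆ T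
  have hj : ∃ j, j ∈ S ∧ ∀ T ∈ RS M, (j ∈ T ↔ S ⊆ T) := by
    rcases eq_or_ne P ∅ with hPe | hPne
    · have hSne : S ≠ ∅ := (mem_RS.mp hS).1
      obtain ⟨j, hjS⟩ := Finset.nonempty_iff_ne_empty.mpr hSne
      refine ⟨j, hjS, fun T hT => ⟨fun hjT => ?_, fun hST => hST hjS⟩⟩
      rcases RS_chain hM hS hT with hsub | hsub
      · exact hsub
      · rcases eq_or_ne T S with rfl | hTS
        · exact Finset.Subset.refl _
        · exact absurd hPe (Finset.ne_empty_of_mem (show T ∈ P from Finset.mem_filter.mpr ⟨hT, hsub, hTS⟩))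
    · obtain ⟨T', hT'P, hT'max'⟩ := Finset.exists_maximal (Finset.nonempty_iff_ne_empty.mpr hPne)
      have hT'max : ∀ x ∈ P, ¬ T' < x := fun x hx hlt => (not_le_of_gt hlt) (hT'max' hx hlt.le)
      have hT'S : T' ⊆ S ∧ T' ≠ S := (Finset.mem_filter.mp hT'P).2
      obtain ⟨j, hjS, hjT'⟩ := Finset.not_subset.mp
        (fun hsub => hT'S.2 (Finset.Subset.antisymm hT'S.1 hsub))
      refine ⟨j, hjS, fun T hT => ⟨fun hjT => ?_, fun hST => hST hjS⟩⟩
      rcases RS_chain hM hS hT with hsub | hsub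
      · exact hsub
      rcases eq_or_ne T S with rfl | hTS
      · exact Finset.Subset.refl _
      have hTP : T ∈ P := Finset.mem_filter.mpr ⟨hT, hsub, hTS⟩
      have hT'RS : T' ∈ RS M := (Finset.mem_filter.mp hT'P).1
      rcases RS_chain hM hT hT'RS with hsub2 | hsub2
      · exact absurd (hsub2 hjT) hjT'
      · rcases eq_or_ne T T' with rfl | hTT'
        · exact absurd hjT hjT'
        · exact absurd (Finset.ssubset_iff_subset_ne.mpr ⟨hsub2, Ne.symm hTT'⟩) (hT'max T hTP)
  obtain ⟨j, hjS, hjiff⟩ := hj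
  refine ⟨j, ?_⟩
  have heq : (RS M).filter (fun T => j ∈ T) = (RS M).filter (fun T => S ⊆ T) := by
    apply Finset.filter_congr
    intro T hT
    exact hjiff T hT
  have hpart : ((RS M).filter (fun T => S ⊆ T)).card + P.card = m := by
    rw [← Finset.card_union_of_disjoint, hP]
    · congr 1
      apply Finset.Subset.antisymm
      · exact Finset.union_subset (Finset.filter_subset _ _) (Finset.filter_subset _ _)
      · intro T hT
        rcases eq_or_ne T S with rfl | hTS
        · exact Finset.mem_union_left _ (Finset.mem_filter.mpr ⟨hT, Finset.Subset.refl _⟩)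
        rcases RS_chain hM hT hS with hsub | hsub
        · exact Finset.mem_union_right _ (Finset.mem_filter.mpr ⟨hT, hsub, hTS⟩)
        · exact Finset.mem_union_left _ (Finset.mem_filter.mpr ⟨hT, hsub⟩)
    · rw [Finset.disjoint_left]
      intro T hT1 hT2
      rw [Finset.mem_filter] at hT1 hT2
      exact hT2.2.2 (Finset.Subset.antisymm hT2.2.1 hT1.2)
  unfold gv
  rw [heq]
  omega

lemma RS_card_le_left {n k : ℕ} (M : Fin n → Fin k → Bool) : (RS M).card ≤ n := by
  calc (RS M).card ≤ (univ.image (rowF M)).card := Finset.card_le_card (Finset.erase_subset _ _)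
    _ ≤ (univ : Finset (Fin n)).card := Finset.card_image_le
    _ = n := by simp

lemma RS_card_le_right {n k : ℕ} {M : Fin n → Fin k → Bool} (hM : IsLonesum M) :
    (RS M).card ≤ k := by
  have hinj : Set.InjOn Finset.card ((RS M : Finset (Finset (Fin k))) : Set (Finset (Fin k))) := by
    intro S hS T hT hc
    rcases RS_chain hM hS hT with hsub | hsub
    · exact Finset.eq_of_subset_of_card_le hsub (le_of_eq hc.symm)
    · exact (Finset.eq_of_subset_of_card_le hsub (le_of_eq hc)).symm
  rw [← Finset.card_image_of_injOn hinj]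
  have : (RS M).image Finset.card ⊆ Finset.Icc 1 k := by
    intro x hx
    obtain ⟨S, hS, rfl⟩ := Finset.mem_image.mp hx
    rw [Finset.mem_Icc]
    refine ⟨Finset.card_pos.mpr (Finset.nonempty_iff_ne_empty.mpr (mem_RS.mp hS).1), ?_⟩
    calc S.card ≤ (univ : Finset (Fin k)).card := Finset.card_le_card (Finset.subset_univ _)
      _ = k := by simp
  calc ((RS M).image Finset.card).card ≤ (Finset.Icc 1 k).card := Finset.card_le_card this
    _ = k := by rw [Nat.card_Icc]; omega

def mkM {n k : ℕ} (m : ℕ) (f : Fin n → Fin (m+1)) (g : Fin k → Fin (m+1)) :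
    Fin n → Fin k → Bool := fun i j => decide (m < (f i : ℕ) + (g j : ℕ))

lemma mkM_lonesum {n k : ℕ} (m : ℕ) (f : Fin n → Fin (m+1)) (g : Fin k → Fin (m+1)) :
    IsLonesum (mkM m f g) := by
  intro i1 i2 j1 j2 _ _
  constructor <;> rintro ⟨h1, h2, h3, h4⟩ <;>
    simp only [mkM, decide_eq_true_eq, decide_eq_false_iff_not, not_lt] at h1 h2 h3 h4 <;> omega

def Wset {k m : ℕ} (g : Fin k → Fin (m+1)) (v : ℕ) : Finset (Fin k) :=
  univ.filter fun j => m < v + (g j : ℕ)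

lemma mem_Wset {k m : ℕ} {g : Fin k → Fin (m+1)} {v : ℕ} {j : Fin k} :
    j ∈ Wset g v ↔ m < v + (g j : ℕ) := by
  simp [Wset]

section Backward

variable {n k m : ℕ} (f : Fin n → Fin (m+1)) (g : Fin k → Fin (m+1))

lemma rowF_mkM (i : Fin n) : rowF (mkM m f g) i = Wset g ((f i : ℕ)) := by
  ext j; simp [rowF, mkM, Wset]

variable (hg : ∀ v : ℕ, 1 ≤ v → v ≤ m → ∃ j, (g j : ℕ) = v)

include hg in
lemma Wset_subset_iff {v v' : ℕ} (hv : v ≤ m) (hv' : v' ≤ m) :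
    Wset g v ⊆ Wset g v' ↔ v ≤ v' := by
  constructor
  · intro hsub
    by_contra hlt
    push_neg at hlt
    have h1 : 1 ≤ m + 1 - v := by omega
    have h2 : m + 1 - v ≤ m := by omega
    obtain ⟨j, hj⟩ := hg _ h1 h2
    have : j ∈ Wset g v := mem_Wset.mpr (by omega)
    have : j ∈ Wset g v' := hsub this
    rw [mem_Wset, hj] at this
    omega
  · intro hle j hj
    rw [mem_Wset] at hj ⊢
    omega

include hg in
lemma Wset_nonempty {v : ℕ} (h1 : 1 ≤ v) (h2 : v ≤ m) : Wset g v ≠ ∅ := by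
  obtain ⟨j, hj⟩ := hg (m + 1 - v) (by omega) (by omega)
  have hjm : j ∈ Wset g v := mem_Wset.mpr (by rw [hj]; omega)
  exact Finset.ne_empty_of_mem hjm

lemma Wset_zero : Wset g 0 = ∅ := by
  ext j
  simp only [mem_Wset, Finset.notMem_empty, iff_false, not_lt, zero_add]
  omega

variable (hf : ∀ v : ℕ, 1 ≤ v → v ≤ m → ∃ i, (f i : ℕ) = v)

include hf hg in
lemma RS_mkM : RS (mkM m f g) = (Finset.Icc 1 m).image (Wset g) := by
  apply Finset.Subset.antisymm
  · intro T hT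
    obtain ⟨hTne, i, hTi⟩ := mem_RS.mp hT
    rw [rowF_mkM] at hTi
    have hfi : (f i : ℕ) ≤ m := by have := (f i).isLt; omega
    have hfi1 : 1 ≤ (f i : ℕ) := by
      rcases Nat.eq_zero_or_pos (f i : ℕ) with h0 | h0
      · rw [h0, Wset_zero] at hTi
        exact absurd hTi.symm hTne
      · exact h0
    rw [← hTi]
    exact Finset.mem_image.mpr ⟨(f i : ℕ), Finset.mem_Icc.mpr ⟨hfi1, hfi⟩, rfl⟩
  · intro T hT
    obtain ⟨v, hv, rfl⟩ := Finset.mem_image.mp hT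
    rw [Finset.mem_Icc] at hv
    obtain ⟨i, hi⟩ := hf v hv.1 hv.2
    rw [mem_RS]
    exact ⟨Wset_nonempty g hg hv.1 hv.2, i, by rw [rowF_mkM, hi]⟩

include hf hg in
lemma Wset_injOn : Set.InjOn (Wset g) ((Finset.Icc 1 m : Finset ℕ) : Set ℕ) := by
  intro v hv v' hv' heq
  simp only [Finset.coe_Icc, Set.mem_Icc] at hv hv'
  have h1 := (Wset_subset_iff g hg hv.2 hv'.2).mp (le_of_eq heq)
  have h2 := (Wset_subset_iff g hg hv'.2 hv.2).mp (le_of_eq heq.symm)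
  omega

include hf hg in
lemma RS_mkM_card : (RS (mkM m f g)).card = m := by
  rw [RS_mkM f g hg hf, Finset.card_image_of_injOn (Wset_injOn f g hg hf), Nat.card_Icc]
  omega

include hf hg in
lemma fv_mkM (i : Fin n) : fv (mkM m f g) i = (f i : ℕ) := by
  have hfi : (f i : ℕ) ≤ m := by have := (f i).isLt; omega
  unfold fv
  rw [RS_mkM f g hg hf, rowF_mkM, Finset.filter_image]
  rw [Finset.card_image_of_injOn ((Wset_injOn f g hg hf).mono (by
    intro x hx
    simp only [Finset.coe_filter, Set.mem_setOf_eq] at hx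
    simp only [Finset.coe_Icc, Set.mem_Icc, ← Finset.mem_Icc]
    exact hx.1))]
  have : (Finset.Icc 1 m).filter (fun v => Wset g v ⊆ Wset g ((f i : ℕ))) = Finset.Icc 1 (f i : ℕ) := by
    ext v
    simp only [Finset.mem_filter, Finset.mem_Icc]
    constructor
    · rintro ⟨⟨h1, h2⟩, hsub⟩
      exact ⟨h1, (Wset_subset_iff g hg h2 hfi).mp hsub⟩
    · rintro ⟨h1, h2⟩
      exact ⟨⟨h1, by omega⟩, (Wset_subset_iff g hg (by omega) hfi).mpr h2⟩
  rw [this, Nat.card_Icc]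
  omega

include hf hg in
lemma gv_mkM (j : Fin k) : gv (mkM m f g) j = (g j : ℕ) := by
  have hgj : (g j : ℕ) ≤ m := by have := (g j).isLt; omega
  unfold gv
  rw [RS_mkM f g hg hf, Finset.filter_image]
  rw [Finset.card_image_of_injOn ((Wset_injOn f g hg hf).mono (by
    intro x hx
    simp only [Finset.coe_filter, Set.mem_setOf_eq] at hx
    simp only [Finset.coe_Icc, Set.mem_Icc, ← Finset.mem_Icc]
    exact hx.1))]
  have : (Finset.Icc 1 m).filter (fun v => j ∈ Wset g v) = Finset.Icc (m + 1 - (g j : ℕ)) m := by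
    ext v
    simp only [Finset.mem_filter, Finset.mem_Icc, mem_Wset]
    omega
  rw [this, Nat.card_Icc]
  omega

end Backward

def covers (n m : ℕ) : Finset (Fin n → Fin (m+1)) :=
  univ.filter fun f => ∀ v : ℕ, 1 ≤ v → v ≤ m → ∃ i, (f i : ℕ) = v

lemma mem_covers {n m : ℕ} {f : Fin n → Fin (m+1)} :
    f ∈ covers n m ↔ ∀ v : ℕ, 1 ≤ v → v ≤ m → ∃ i, (f i : ℕ) = v := by
  simp [covers]

def sqF {m : ℕ} (v : ℕ) (x : Fin (m+2)) : Fin (m+1) :=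
  if (x : ℕ) < v then ⟨min (x : ℕ) m, by have := x.isLt; omega⟩
  else ⟨(x : ℕ) - 1, by have := x.isLt; omega⟩

def unF {m : ℕ} (v : ℕ) (y : Fin (m+1)) : Fin (m+2) :=
  if (y : ℕ) < v then ⟨y, by have := y.isLt; omega⟩ else ⟨(y : ℕ) + 1, by have := y.isLt; omega⟩

lemma sqF_val {m : ℕ} (v : ℕ) (x : Fin (m+2)) :
    ((sqF v x : Fin (m+1)) : ℕ) = if (x : ℕ) < v then min (x : ℕ) m else (x : ℕ) - 1 := by
  unfold sqF; split <;> rfl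

lemma unF_val {m : ℕ} (v : ℕ) (y : Fin (m+1)) :
    ((unF v y : Fin (m+2)) : ℕ) = if (y : ℕ) < v then (y : ℕ) else (y : ℕ) + 1 := by
  unfold unF; split <;> rfl

lemma un_sq {m v : ℕ} (hv : v ≤ m + 1) (x : Fin (m+2)) (hx : (x : ℕ) ≠ v) : unF v (sqF v x) = x := by
  apply Fin.ext
  rw [unF_val, sqF_val]
  have := x.isLt
  split_ifs <;> omega

lemma sq_un {m v : ℕ} (y : Fin (m+1)) : sqF v (unF v y) = y := by
  apply Fin.ext
  rw [sqF_val, unF_val]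
  have := y.isLt
  split_ifs <;> omega

lemma stirling_succ_succ (n k : ℕ) :
    stirling (n+1) (k+1) = stirling n k + (k + 1) * stirling n (k + 1) := rfl

lemma stirling_one : ∀ n, stirling (n+1) 1 = 1
  | 0 => rfl
  | n+1 => by
      rw [stirling_succ_succ, stirling_one n]
      rfl

lemma covers_card (n m : ℕ) : (covers n m).card = m.factorial * stirling (n+1) (m+1) := by
  induction n generalizing m with
  | zero =>
    cases m with
    | zero =>
      have : covers 0 0 = (univ : Finset (Fin 0 → Fin 1)) := by
        apply Finset.filter_true_of_mem
        intro f _ v h1 h2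
        omega
      rw [this, Finset.card_univ]
      simp [stirling]
    | succ m =>
      have : covers 0 (m+1) = ∅ := by
        rw [Finset.eq_empty_iff_forall_notMem]
        intro f hf
        obtain ⟨i, -⟩ := mem_covers.mp hf 1 le_rfl (by omega)
        exact i.elim0
      rw [this]
      simp [stirling]
  | succ n ih =>
    cases m with
    | zero =>
      have : covers (n+1) 0 = (univ : Finset (Fin (n+1) → Fin 1)) := by
        apply Finset.filter_true_of_mem
        intro f _ v h1 h2
        omega
      rw [this, Finset.card_univ]
      simp [stirling_one]
    | succ m =>
      set tailP : (Fin (n+1) → Fin (m+2)) → Prop :=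
        fun f => ∀ v : ℕ, 1 ≤ v → v ≤ m + 1 → ∃ i : Fin n, (f i.succ : ℕ) = v with htailP
      have hsplit := Finset.card_filter_add_card_filter_not
        (s := covers (n+1) (m+1)) (p := tailP)
      -- card of A
      have hA : ((covers (n+1) (m+1)).filter tailP).card
          = ((univ : Finset (Fin (m+2))) ×ˢ covers n (m+1)).card := by
        refine Finset.card_bij' (fun f _ => ((f 0 : Fin (m+2)), Fin.tail f))
          (fun p _ => Fin.cons p.1 p.2) ?_ ?_ ?_ ?_
        · intro f hf
          rw [Finset.mem_filter] at hf
          rw [Finset.mem_product]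
          exact ⟨Finset.mem_univ _, mem_covers.mpr hf.2⟩
        · intro p hp
          rw [Finset.mem_product] at hp
          have hc := mem_covers.mp hp.2
          rw [Finset.mem_filter]
          constructor
          · rw [mem_covers]
            intro v h1 h2
            obtain ⟨i, hi⟩ := hc v h1 h2
            exact ⟨i.succ, by simp only [Fin.cons_succ]; exact hi⟩
          · intro v h1 h2
            obtain ⟨i, hi⟩ := hc v h1 h2
            exact ⟨i, by simp only [Fin.cons_succ]; exact hi⟩
        · intro f _
          exact Fin.cons_self_tail f
        · intro p _
          refine Prod.ext ?_ ?_
          · simp only [Fin.cons_zero]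
          · simp only [Fin.tail_cons]
      -- card of B
      have hB : ((covers (n+1) (m+1)).filter (fun f => ¬ tailP f)).card
          = (((univ : Finset (Fin (m+2))).filter (fun v => v ≠ 0)) ×ˢ covers n m).card := by
        refine Finset.card_bij' (fun f _ => ((f 0 : Fin (m+2)), fun i : Fin n => sqF (f 0 : ℕ) (f i.succ)))
          (fun p _ => Fin.cons p.1 (fun i : Fin n => unF (p.1 : ℕ) (p.2 i))) ?_ ?_ ?_ ?_
        · intro f hf
          rw [Finset.mem_filter] at hf
          obtain ⟨hfc, hnt⟩ := hf
          have hcov := mem_covers.mp hfc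
          simp only [htailP] at hnt
          push_neg at hnt
          obtain ⟨w, hw1, hw2, hw3⟩ := hnt
          obtain ⟨i, hi⟩ := hcov w hw1 hw2
          have hi0 : i = 0 := by
            rcases Fin.eq_zero_or_eq_succ i with rfl | ⟨j, rfl⟩
            · rfl
            · exact absurd hi (hw3 j)
          subst hi0
          have havoid : ∀ j : Fin n, (f j.succ : ℕ) ≠ (f 0 : ℕ) := by
            intro j hc
            exact hw3 j (by rw [hc, hi])
          rw [Finset.mem_product, Finset.mem_filter]
          refine ⟨⟨Finset.mem_univ _, fun h => by
            have h' : f 0 = 0 := h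
            rw [h'] at hi; simp at hi; omega⟩, ?_⟩
          rw [mem_covers]
          intro u h1 h2
          rcases Nat.lt_or_ge u (f 0 : ℕ) with hc | hc
          · obtain ⟨i', hi'⟩ := hcov u h1 (by omega)
            have : i' ≠ 0 := by intro h; rw [h] at hi'; omega
            obtain ⟨j, rfl⟩ := Fin.eq_succ_of_ne_zero this
            refine ⟨j, ?_⟩
            rw [sqF_val, hi', if_pos hc]
            omega
          · obtain ⟨i', hi'⟩ := hcov (u+1) (by omega) (by omega)
            have : i' ≠ 0 := by intro h; rw [h] at hi'; omega
            obtain ⟨j, rfl⟩ := Fin.eq_succ_of_ne_zero this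
            refine ⟨j, ?_⟩
            rw [sqF_val, hi', if_neg (by omega)]
            omega
        · intro p hp
          rw [Finset.mem_product, Finset.mem_filter] at hp
          obtain ⟨⟨-, hp1⟩, hp2⟩ := hp
          have hgc := mem_covers.mp hp2
          have hv1 : 1 ≤ (p.1 : ℕ) := by
            rcases Nat.eq_zero_or_pos (p.1 : ℕ) with h | h
            · exact absurd (Fin.ext (by simp [h]) : p.1 = 0) hp1
            · exact h
          have hv2 : (p.1 : ℕ) ≤ m + 1 := by have := p.1.isLt; omega
          rw [Finset.mem_filter]
          constructor
          · rw [mem_covers]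
            intro w h1 h2
            by_cases hw : w = (p.1 : ℕ)
            · exact ⟨0, by simp only [Fin.cons_zero]; omega⟩
            · rcases Nat.lt_or_ge w (p.1 : ℕ) with hc | hc
              · obtain ⟨i, hi⟩ := hgc w h1 (by omega)
                refine ⟨i.succ, ?_⟩
                simp only [Fin.cons_succ, unF_val, hi, if_pos hc]
              · obtain ⟨i, hi⟩ := hgc (w-1) (by omega) (by omega)
                refine ⟨i.succ, ?_⟩
                simp only [Fin.cons_succ, unF_val, hi, if_neg (show ¬ w - 1 < (p.1 : ℕ) by omega)]
                omega
          · intro ht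
            obtain ⟨i, hi⟩ := ht (p.1 : ℕ) hv1 hv2
            simp only [Fin.cons_succ, unF_val] at hi
            split_ifs at hi <;> omega
        · intro f hf
          rw [Finset.mem_filter] at hf
          obtain ⟨hfc, hnt⟩ := hf
          have hcov := mem_covers.mp hfc
          simp only [htailP] at hnt
          push_neg at hnt
          obtain ⟨w, hw1, hw2, hw3⟩ := hnt
          obtain ⟨i, hi⟩ := hcov w hw1 hw2
          have hi0 : i = 0 := by
            rcases Fin.eq_zero_or_eq_succ i with rfl | ⟨j, rfl⟩
            · rfl
            · exact absurd hi (hw3 j)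
          subst hi0
          have havoid : ∀ j : Fin n, (f j.succ : ℕ) ≠ (f 0 : ℕ) := by
            intro j hc
            exact hw3 j (by rw [hc, hi])
          funext x
          induction x using Fin.cases with
          | zero => simp only [Fin.cons_zero]
          | succ j =>
            simp only [Fin.cons_succ]
            exact un_sq (by have := (f 0).isLt; omega) _ (havoid j)
        · intro p hp
          refine Prod.ext ?_ ?_
          · simp only [Fin.cons_zero]
          · funext i
            simp only [Fin.cons_zero, Fin.cons_succ]
            exact sq_un _
      -- assemble
      have hAcard : ((univ : Finset (Fin (m+2))) ×ˢ covers n (m+1)).card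
          = (m+2) * (covers n (m+1)).card := by
        rw [Finset.card_product, Finset.card_univ, Fintype.card_fin]
      have hBcard : (((univ : Finset (Fin (m+2))).filter (fun v => v ≠ 0)) ×ˢ covers n m).card
          = (m+1) * (covers n m).card := by
        rw [Finset.card_product, Finset.filter_ne', Finset.card_erase_of_mem (Finset.mem_univ _),
          Finset.card_univ, Fintype.card_fin]
        norm_num
      rw [← hsplit, hA, hB, hAcard, hBcard, ih, ih]
      have hst : stirling (n+2) (m+2) = stirling (n+1) (m+1) + (m+2) * stirling (n+1) (m+2) := rfl
      rw [hst, Nat.factorial_succ]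
      ring

theorem card_lonesum_eq (n k : ℕ) :
    (Finset.univ.filter (fun M : Fin n → Fin k → Bool => IsLonesum M)).card
      = ∑ m ∈ Finset.range (min n k + 1),
          m.factorial * stirling (n + 1) (m + 1) * m.factorial * stirling (k + 1) (m + 1) := by
  set s := Finset.univ.filter (fun M : Fin n → Fin k → Bool => IsLonesum M) with hs
  have h1 : s.card = ∑ m ∈ Finset.range (min n k + 1),
      (s.filter fun M => (RS M).card = m).card := by
    apply Finset.card_eq_sum_card_fiberwise
    intro M hM
    rw [hs, Finset.mem_coe, Finset.mem_filter] at hM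
    simp only [Finset.mem_coe, Finset.mem_range]
    have hn := RS_card_le_left M
    have hk := RS_card_le_right hM.2
    omega
  rw [h1]
  apply Finset.sum_congr rfl
  intro m hm
  have hfiber : (s.filter fun M => (RS M).card = m).card
      = ((covers n m) ×ˢ (covers k m)).card := by
    refine Finset.card_bij'
      (fun M hM => ((fun i => (⟨fv M i, by
          rw [hs, Finset.mem_filter, Finset.mem_filter] at hM
          have := fv_le M i
          omega⟩ : Fin (m+1))),
        (fun j => (⟨gv M j, by
          rw [hs, Finset.mem_filter, Finset.mem_filter] at hM
          have := gv_le M j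
          omega⟩ : Fin (m+1)))))
      (fun p _ => mkM m p.1 p.2) ?_ ?_ ?_ ?_
    · intro M hM
      rw [hs, Finset.mem_filter, Finset.mem_filter] at hM
      obtain ⟨⟨-, hL⟩, hcard⟩ := hM
      rw [Finset.mem_product]
      constructor
      · rw [mem_covers]
        intro v h1 h2
        obtain ⟨i, hi⟩ := fv_covers hL h1 (by omega)
        exact ⟨i, hi⟩
      · rw [mem_covers]
        intro v h1 h2
        obtain ⟨j, hj⟩ := gv_covers hL h1 (by omega)
        exact ⟨j, hj⟩
    · intro p hp
      rw [Finset.mem_product] at hp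
      have hf := mem_covers.mp hp.1
      have hg := mem_covers.mp hp.2
      rw [Finset.mem_filter]
      refine ⟨?_, RS_mkM_card p.1 p.2 hg hf⟩
      rw [hs, Finset.mem_filter]
      exact ⟨Finset.mem_univ _, mkM_lonesum m p.1 p.2⟩
    · intro M hM
      rw [Finset.mem_filter] at hM
      obtain ⟨hMs, hcard⟩ := hM
      rw [hs, Finset.mem_filter] at hMs
      have hL := hMs.2
      funext i j
      have hk := key_iff hL i j
      rw [hcard] at hk
      show decide ((m : ℕ) < fv M i + gv M j) = M i j
      cases hMij : M i j with
      | true => exact decide_eq_true (hk.mp hMij)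
      | false =>
        rw [decide_eq_false_iff_not]
        intro hlt
        rw [hk.mpr hlt] at hMij
        exact Bool.noConfusion hMij
    · intro p hp
      rw [Finset.mem_product] at hp
      have hf := mem_covers.mp hp.1
      have hg := mem_covers.mp hp.2
      refine Prod.ext ?_ ?_
      · funext i
        apply Fin.ext
        show fv (mkM m p.1 p.2) i = (p.1 i : ℕ)
        exact fv_mkM p.1 p.2 hg hf i
      · funext j
        apply Fin.ext
        show gv (mkM m p.1 p.2) j = (p.2 j : ℕ)
        exact gv_mkM p.1 p.2 hg hf j
  rw [hfiber, Finset.card_product, covers_card, covers_card]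
  ring
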